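/- Fix d ≥ 1, L > 0 and an integer n ≥ 1. Let ψ : ℝ → ℝ be twice continuously differentiable with |ψ'(r)| ≤ 1 for all r ∈ ℝ and 0 ≤ ψ''(r) ≤ 2/(L n r²) for all r ≠ 0. Let x = (x₁,x₂), y = (y₁,y₂) ∈ ℝ^d × ℝ^d with x ≠ y and x₂ ≠ y₂, and set |x−y| = (|x₁−y₁|² + |x₂−y₂|²)^{1/2}. Let b₁, b₂ ∈ ℝ^d and d×d real matrices σ₁, σ₂ satisfy |b₁−b₂|² + ‖σ₁−σ₂‖² ≤ L|x−y|², and put Ā = |(σ₁−σ₂)ᵀ(x₂−y₂)|²/|x₂−y₂|². Then (1/2)(ψ'(|x−y|)/|x−y|)[‖σ₁−σ₂‖² − Ā + 2⟨x₂−y₂, b₁−b₂⟩ + 2⟨x₁−y₁, x₂−y₂⟩] + (1/2)ψ''(|x−y|) Ā ≤ (L+1)|x−y| + 1/n. -/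

import Mathlib

open MeasureTheory

set_option maxHeartbeats 1000000

/-- Euclidean norm of a vector in `ℝ^d`. -/
noncomputable def eucNorm {d : ℕ} (v : Fin d → ℝ) : ℝ := Real.sqrt (∑ i, v i ^ 2)

/-- Euclidean inner product in `ℝ^d`. -/
noncomputable def eucInner {d : ℕ} (v w : Fin d → ℝ) : ℝ := ∑ i, v i * w i

/-- Frobenius norm of a `d × d` real matrix. -/
noncomputable def frobNorm {d : ℕ} (A : Matrix (Fin d) (Fin d) ℝ) : ℝ :=
  Real.sqrt (∑ i, ∑ j, A i j ^ 2)

lemma eucNorm_nonneg' {d : ℕ} (v : Fin d → ℝ) : 0 ≤ eucNorm v := Real.sqrt_nonneg _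

lemma sq_eucNorm {d : ℕ} (v : Fin d → ℝ) : eucNorm v ^ 2 = ∑ i, v i ^ 2 :=
  Real.sq_sqrt (Finset.sum_nonneg fun i _ => sq_nonneg _)

lemma frobNorm_nonneg' {d : ℕ} (A : Matrix (Fin d) (Fin d) ℝ) : 0 ≤ frobNorm A :=
  Real.sqrt_nonneg _

lemma sq_frobNorm {d : ℕ} (A : Matrix (Fin d) (Fin d) ℝ) :
    frobNorm A ^ 2 = ∑ i, ∑ j, A i j ^ 2 :=
  Real.sq_sqrt (Finset.sum_nonneg fun i _ => Finset.sum_nonneg fun j _ => sq_nonneg _)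

lemma eucNorm_pos {d : ℕ} {v : Fin d → ℝ} (h : v ≠ 0) : 0 < eucNorm v := by
  rw [eucNorm, Real.sqrt_pos]
  rcases Function.ne_iff.mp h with ⟨i, hi⟩
  have h1 : 0 < v i ^ 2 := pow_two_pos_of_ne_zero hi
  exact lt_of_lt_of_le h1 (Finset.single_le_sum (f := fun j => v j ^ 2)
    (fun j _ => sq_nonneg _) (Finset.mem_univ i))

lemma abs_eucInner_le {d : ℕ} (v w : Fin d → ℝ) :
    |eucInner v w| ≤ eucNorm v * eucNorm w := by
  rw [← Real.sqrt_sq_eq_abs]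
  calc Real.sqrt (eucInner v w ^ 2)
      ≤ Real.sqrt ((∑ i, v i ^ 2) * ∑ i, w i ^ 2) :=
        Real.sqrt_le_sqrt (Finset.sum_mul_sq_le_sq_mul_sq _ _ _)
    _ = eucNorm v * eucNorm w := Real.sqrt_mul (Finset.sum_nonneg fun i _ => sq_nonneg _) _

lemma mulVec_sq_le {d : ℕ} (M : Matrix (Fin d) (Fin d) ℝ) (v : Fin d → ℝ) :
    eucNorm (M.transpose.mulVec v) ^ 2 ≤ frobNorm M ^ 2 * eucNorm v ^ 2 := by
  rw [sq_eucNorm, sq_frobNorm, sq_eucNorm]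
  have hc : (∑ i, ∑ j, M i j ^ 2) = ∑ j, ∑ i, M i j ^ 2 := Finset.sum_comm
  rw [hc, Finset.sum_mul]
  refine Finset.sum_le_sum fun j _ => ?_
  have hj : M.transpose.mulVec v j = ∑ i, M i j * v i := by
    simp [Matrix.mulVec, Matrix.transpose, dotProduct]
  rw [hj]
  exact Finset.sum_mul_sq_le_sq_mul_sq _ _ _

/-- Bound on the diffusion part of the coupling operator (estimate (3.14)). -/
theorem coupling_diffusion_part_estimate
    {d : ℕ} (hd : 1 ≤ d) (L : ℝ) (hL : 0 < L) (n : ℕ) (hn : 1 ≤ n)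
    (ψ : ℝ → ℝ) (hψ : ContDiff ℝ 2 ψ)
    (hψ' : ∀ r : ℝ, |deriv ψ r| ≤ 1)
    (hψ'' : ∀ r : ℝ, r ≠ 0 →
      0 ≤ deriv (deriv ψ) r ∧ deriv (deriv ψ) r ≤ 2 / (L * n * r ^ 2))
    (x₁ x₂ y₁ y₂ : Fin d → ℝ)
    (hxy : (x₁, x₂) ≠ (y₁, y₂)) (hx₂y₂ : x₂ ≠ y₂)
    (b₁ b₂ : Fin d → ℝ) (σ₁ σ₂ : Matrix (Fin d) (Fin d) ℝ)
    (hLip : eucNorm (b₁ - b₂) ^ 2 + frobNorm (σ₁ - σ₂) ^ 2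
      ≤ L * Real.sqrt (eucNorm (x₁ - y₁) ^ 2 + eucNorm (x₂ - y₂) ^ 2) ^ 2) :
    (1 / 2) * (deriv ψ (Real.sqrt (eucNorm (x₁ - y₁) ^ 2 + eucNorm (x₂ - y₂) ^ 2))
        / Real.sqrt (eucNorm (x₁ - y₁) ^ 2 + eucNorm (x₂ - y₂) ^ 2))
      * (frobNorm (σ₁ - σ₂) ^ 2
          - eucNorm ((σ₁ - σ₂).transpose.mulVec (x₂ - y₂)) ^ 2 / eucNorm (x₂ - y₂) ^ 2
          + 2 * eucInner (x₂ - y₂) (b₁ - b₂) + 2 * eucInner (x₁ - y₁) (x₂ - y₂))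
    + (1 / 2) * deriv (deriv ψ) (Real.sqrt (eucNorm (x₁ - y₁) ^ 2 + eucNorm (x₂ - y₂) ^ 2))
      * (eucNorm ((σ₁ - σ₂).transpose.mulVec (x₂ - y₂)) ^ 2 / eucNorm (x₂ - y₂) ^ 2)
    ≤ (L + 1) * Real.sqrt (eucNorm (x₁ - y₁) ^ 2 + eucNorm (x₂ - y₂) ^ 2) + 1 / n := by
  set u : Fin d → ℝ := x₁ - y₁ with hu
  set v : Fin d → ℝ := x₂ - y₂ with hv
  set b : Fin d → ℝ := b₁ - b₂ with hb
  set M : Matrix (Fin d) (Fin d) ℝ := σ₁ - σ₂ with hM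
  set r : ℝ := Real.sqrt (eucNorm u ^ 2 + eucNorm v ^ 2) with hr
  have hvne : v ≠ 0 := sub_ne_zero.mpr hx₂y₂
  have hvpos : 0 < eucNorm v := eucNorm_pos hvne
  have hrpos : 0 < r := by
    rw [hr, Real.sqrt_pos]
    nlinarith [eucNorm_nonneg' u]
  have hr2 : r ^ 2 = eucNorm u ^ 2 + eucNorm v ^ 2 := by
    rw [hr]
    exact Real.sq_sqrt (by nlinarith [eucNorm_nonneg' u])
  have hule : eucNorm u ≤ r := by
    have h1 : eucNorm u ^ 2 ≤ r ^ 2 := by nlinarith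
    nlinarith [eucNorm_nonneg' u]
  have hvle : eucNorm v ≤ r := by
    have h1 : eucNorm v ^ 2 ≤ r ^ 2 := by nlinarith [eucNorm_nonneg' u]
    nlinarith
  set A : ℝ := eucNorm (M.transpose.mulVec v) ^ 2 / eucNorm v ^ 2 with hA
  have hAnonneg : 0 ≤ A := by positivity
  have hAle : A ≤ frobNorm M ^ 2 := by
    rw [hA, div_le_iff₀ (by positivity)]
    exact mulVec_sq_le M v
  set F : ℝ := frobNorm M ^ 2 with hF
  set B : ℝ := eucNorm b ^ 2 with hB
  have hFnonneg : 0 ≤ F := sq_nonneg _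
  have hBnonneg : 0 ≤ B := sq_nonneg _
  have hLF : B + F ≤ L * r ^ 2 := hLip
  -- second derivative bounds
  obtain ⟨hpp0, hpp1⟩ := hψ'' r hrpos.ne'
  have hn' : (1:ℝ) ≤ (n:ℝ) := by exact_mod_cast hn
  have hnpos : (0:ℝ) < n := by linarith
  -- second order term
  have hALr : A ≤ L * r ^ 2 := le_trans hAle (by linarith)
  have hterm2 : (1/2) * deriv (deriv ψ) r * A ≤ 1 / n := by
    have h1 : deriv (deriv ψ) r * A ≤ (2 / (L * n * r ^ 2)) * (L * r ^ 2) :=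
      mul_le_mul hpp1 hALr hAnonneg (by positivity)
    have h2 : (2 / (L * n * r ^ 2)) * (L * r ^ 2) = 2 / n := by
      field_simp
    rw [h2] at h1
    have h3 : (1:ℝ) / n = 2 / n / 2 := by ring
    rw [h3]
    linarith
  -- first order term
  have hp1 : |deriv ψ r| ≤ 1 := hψ' r
  set S : ℝ := F - A + 2 * eucInner v b + 2 * eucInner u v with hS
  have hvb := abs_eucInner_le v b
  have huv := abs_eucInner_le u v
  have hbnn := eucNorm_nonneg' b
  have hunn := eucNorm_nonneg' u
  have hvb' : |eucInner v b| ≤ r * eucNorm b :=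
    le_trans hvb (mul_le_mul_of_nonneg_right hvle hbnn)
  have h2vb : 2 * |eucInner v b| ≤ r ^ 2 + B := by
    nlinarith [sq_nonneg (r - eucNorm b)]
  have h2uv : 2 * |eucInner u v| ≤ r ^ 2 := by
    nlinarith [sq_nonneg (eucNorm u - eucNorm v), mul_le_mul huv huv (abs_nonneg _) (by positivity : (0:ℝ) ≤ eucNorm u * eucNorm v)]
  have hSabs : |S| ≤ (L + 2) * r ^ 2 := by
    rw [abs_le]
    constructor
    · have := neg_abs_le (eucInner v b)
      have := neg_abs_le (eucInner u v)
      nlinarith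
    · have := le_abs_self (eucInner v b)
      have := le_abs_self (eucInner u v)
      nlinarith
  have hterm1 : (1/2) * (deriv ψ r / r) * S ≤ (L + 1) * r := by
    have hq : |deriv ψ r / r| ≤ 1 / r := by
      rw [abs_div, abs_of_pos hrpos]
      gcongr
    have h1 : (1/2) * (deriv ψ r / r) * S ≤ (1/2) * (1/r) * ((L + 2) * r ^ 2) := by
      calc (1/2) * (deriv ψ r / r) * S ≤ |(1/2) * (deriv ψ r / r) * S| := le_abs_self _
        _ = (1/2) * |deriv ψ r / r| * |S| := by
            rw [abs_mul, abs_mul]; norm_num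
        _ ≤ (1/2) * (1/r) * ((L + 2) * r ^ 2) := by
            refine mul_le_mul (by linarith [hq] : (1/2) * |deriv ψ r / r| ≤ (1/2) * (1/r))
              hSabs (abs_nonneg _) (by positivity)
    have h2 : (1/2) * (1/r) * ((L + 2) * r ^ 2) = (L + 2) / 2 * r := by
      field_simp
    rw [h2] at h1
    nlinarith
  linarith [hterm1, hterm2]
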